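/- In a finite median graph Γ = Γ(P) dual to a finite poc-set P, a set of vertices W is convex (closed under intervals: I(u,v) ⊆ W for all u,v ∈ W) if and only if W equals an intersection of halfspaces V(a) = {u ∈ VΓ(P) : a ∈ u}, a ∈ P. -/

import Mathlib

structure PocSet (P : Type*) [PartialOrder P] where
  zero : P
  zero_le : ∀ a : P, zero ≤ a
  star : P → P
  star_star : ∀ a : P, star (star a) = a
  star_anti : ∀ a b : P, a ≤ b → star b ≤ star a
  eq_zero_of_le_star : ∀ a : P, a ≤ star a → a = zero

namespace PocSet

variable {P : Type*} [PartialOrder P]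

/-- The maximum element `1 = 0*` of a poc-set. -/
def one (S : PocSet P) : P := S.star S.zero

/-- An element is proper if it is neither `0` nor `1`. -/
def Proper (S : PocSet P) (a : P) : Prop := a ≠ S.zero ∧ a ≠ S.one

/-- A subset is coherent if `a ≤ b*` holds for no two of its members. -/
def Coherent (S : PocSet P) (α : Set P) : Prop := ∀ a ∈ α, ∀ b ∈ α, ¬ a ≤ S.star b

/-- A vertex of `Γ(P)`: a coherent `*`-selection. -/
def IsVertex (S : PocSet P) (α : Set P) : Prop :=
  S.Coherent α ∧ ∀ a : P, a ∈ α ↔ S.star a ∉ α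

/-- The metric `Δ(u,v) = |u Δ v| / 2` on vertices. -/
noncomputable def delta (S : PocSet P) (u v : Set P) : ℝ :=
  ((symmDiff u v).ncard : ℝ) / 2

/-- The median of three sets. -/
def med (u v w : Set P) : Set P := (u ∩ v) ∪ (v ∩ w) ∪ (u ∩ w)

end PocSet

/-- A morphism of poc-sets: sends `0` to `0`, preserves order, commutes with `*`. -/
def IsPocMorphism {P Q : Type*} [PartialOrder P] [PartialOrder Q]
    (S : PocSet P) (T : PocSet Q) (f : P → Q) : Prop :=
  f S.zero = T.zero ∧ (∀ a b : P, a ≤ b → f a ≤ f b) ∧ ∀ a : P, f (S.star a) = T.star (f a)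

section Aux

variable {P : Type*} [PartialOrder P]

/-- Counting lemma: `|A Δ B| + 2|A ∩ B| = |A| + |B|` for finite sets. -/
lemma aux_ncard_symmDiff_add [Finite P] (A B : Set P) :
    (symmDiff A B).ncard + 2 * (A ∩ B).ncard = A.ncard + B.ncard := by
  have e := symmDiff_sup_inf A B
  simp only [Set.sup_eq_union, Set.inf_eq_inter] at e
  have h1 : (symmDiff A B).ncard + (A ∩ B).ncard = (A ∪ B).ncard := by
    have hd : Disjoint (symmDiff A B) (A ∩ B) := disjoint_symmDiff_inf A B
    rw [← Set.ncard_union_eq hd (Set.toFinite _) (Set.toFinite _), e]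
  have h2 := Set.ncard_union_add_ncard_inter A B (Set.toFinite _) (Set.toFinite _)
  omega

lemma aux_disj_iff (u v z : Set P) :
    (symmDiff u z) ∩ (symmDiff z v) = ∅ ↔ (u ∩ v ⊆ z ∧ z ⊆ u ∪ v) := by
  simp only [Set.eq_empty_iff_forall_notMem, Set.subset_def, Set.mem_inter_iff,
    Set.mem_union, Set.mem_symmDiff, ← forall_and]
  constructor <;> intro h x <;> have := h x <;> tauto

lemma aux_ncard_between_iff [Finite P] (u v z : Set P) :
    (symmDiff u z).ncard + (symmDiff z v).ncard = (symmDiff u v).ncard ↔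
      (u ∩ v ⊆ z ∧ z ⊆ u ∪ v) := by
  have hsymm : symmDiff (symmDiff u z) (symmDiff z v) = symmDiff u v := by
    rw [symmDiff_assoc, symmDiff_symmDiff_cancel_left]
  have h := aux_ncard_symmDiff_add (symmDiff u z) (symmDiff z v)
  rw [hsymm] at h
  rw [← aux_disj_iff u v z, ← Set.ncard_eq_zero (Set.toFinite _)]
  omega

lemma aux_delta_eq_iff [Finite P] (S : PocSet P) (u v z : Set P) :
    S.delta u z + S.delta z v = S.delta u v ↔
      (symmDiff u z).ncard + (symmDiff z v).ncard = (symmDiff u v).ncard := by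
  unfold PocSet.delta
  rw [← add_div, div_left_inj' (two_ne_zero (α := ℝ))]
  exact_mod_cast Iff.rfl

lemma aux_med_isVertex (S : PocSet P) {α β γ : Set P}
    (hα : S.IsVertex α) (hβ : S.IsVertex β) (hγ : S.IsVertex γ) :
    S.IsVertex (PocSet.med α β γ) := by
  constructor
  · rintro a ha b hb hab
    have h3 : (a ∈ α ∧ b ∈ α) ∨ (a ∈ β ∧ b ∈ β) ∨ (a ∈ γ ∧ b ∈ γ) := by
      simp only [PocSet.med, Set.mem_union, Set.mem_inter_iff] at ha hb
      tauto
    rcases h3 with ⟨h1, h2⟩ | ⟨h1, h2⟩ | ⟨h1, h2⟩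
    exacts [hα.1 a h1 b h2 hab, hβ.1 a h1 b h2 hab, hγ.1 a h1 b h2 hab]
  · intro a
    have h1 := hα.2 a
    have h2 := hβ.2 a
    have h3 := hγ.2 a
    simp only [PocSet.med, Set.mem_union, Set.mem_inter_iff]
    tauto

end Aux

theorem stmt17 {P : Type*} [PartialOrder P] [Finite P] (S : PocSet P)
    (W : Set {α : Set P // S.IsVertex α}) :
    (∀ u ∈ W, ∀ v ∈ W, ∀ z : {α : Set P // S.IsVertex α},
        S.delta u.1 z.1 + S.delta z.1 v.1 = S.delta u.1 v.1 → z ∈ W) ↔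
      ∃ A : Set P, W = ⋂ a ∈ A, {u : {α : Set P // S.IsVertex α} | a ∈ u.1} := by
  constructor
  · intro hconv
    refine ⟨{a : P | ∀ u ∈ W, a ∈ u.1}, ?_⟩
    apply Set.Subset.antisymm
    · intro u hu
      simp only [Set.mem_iInter, Set.mem_setOf_eq]
      exact fun a ha => ha u hu
    · intro z hz
      simp only [Set.mem_iInter, Set.mem_setOf_eq] at hz
      rcases W.eq_empty_or_nonempty with hW | hW
      · exfalso
        have hzero : S.zero ∈ z.1 := hz S.zero (by intro u hu; rw [hW] at hu; exact hu.elim)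
        exact z.2.1 S.zero hzero S.zero hzero (S.zero_le _)
      · obtain ⟨u, huW, hmin⟩ := Set.exists_min_image W
          (fun v => (symmDiff v.1 z.1).ncard) (Set.toFinite W) hW
        -- claim: for every v ∈ W, v ∩ z ⊆ u
        have hgate : ∀ v ∈ W, v.1 ∩ z.1 ⊆ u.1 := by
          intro v hv
          set m : {α : Set P // S.IsVertex α} :=
            ⟨PocSet.med u.1 v.1 z.1, aux_med_isVertex S u.2 v.2 z.2⟩ with hm
          have hmed_sub1 : u.1 ∩ v.1 ⊆ m.1 := fun x hx => Or.inl (Or.inl hx)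
          have hmed_sub2 : m.1 ⊆ u.1 ∪ v.1 := by
            rintro x ((hx | hx) | hx)
            exacts [Or.inl hx.1, Or.inr hx.1, Or.inl hx.1]
          have hmed_sub3 : u.1 ∩ z.1 ⊆ m.1 := fun x hx => Or.inr hx
          have hmed_sub4 : m.1 ⊆ u.1 ∪ z.1 := by
            rintro x ((hx | hx) | hx)
            exacts [Or.inl hx.1, Or.inr hx.2, Or.inl hx.1]
          have hmW : m ∈ W := by
            apply hconv u huW v hv m
            rw [aux_delta_eq_iff, aux_ncard_between_iff]
            exact ⟨hmed_sub1, hmed_sub2⟩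
          have hb : (symmDiff u.1 m.1).ncard + (symmDiff m.1 z.1).ncard
              = (symmDiff u.1 z.1).ncard :=
            (aux_ncard_between_iff u.1 z.1 m.1).mpr ⟨hmed_sub3, hmed_sub4⟩
          have hle : (symmDiff u.1 z.1).ncard ≤ (symmDiff m.1 z.1).ncard := hmin m hmW
          have h0 : (symmDiff u.1 m.1).ncard = 0 := by omega
          have hum : u.1 = m.1 := symmDiff_eq_bot.mp ((Set.ncard_eq_zero (Set.toFinite _)).mp h0)
          intro x hx
          rw [hum]
          exact Or.inl (Or.inr hx)
        -- now show u = z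
        by_cases huz : u.1 = z.1
        · have : u = z := Subtype.ext huz
          rwa [← this]
        · exfalso
          have hne : (symmDiff u.1 z.1).Nonempty := by
            rw [Set.nonempty_iff_ne_empty]
            intro h
            exact huz (symmDiff_eq_bot.mp h)
          obtain ⟨x, hx⟩ := hne
          -- produce a ∈ z.1 \ u.1
          obtain ⟨a, haz, hau⟩ : ∃ a, a ∈ z.1 ∧ a ∉ u.1 := by
            rw [Set.mem_symmDiff] at hx
            rcases hx with ⟨hxu, hxz⟩ | ⟨hxz, hxu⟩
            · refine ⟨S.star x, ?_, ?_⟩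
              · by_contra h
                exact hxz ((z.2.2 x).mpr h)
              · intro h
                exact ((u.2.2 x).mp hxu) h
            · exact ⟨x, hxz, hxu⟩
          have hstar : ∀ v ∈ W, S.star a ∈ v.1 := by
            intro v hv
            by_contra h
            have hav : a ∈ v.1 := by
              by_contra hav
              exact hav ((v.2.2 a).mpr h)
            exact hau (hgate v hv ⟨hav, haz⟩)
          have : S.star a ∈ z.1 := hz (S.star a) hstar
          exact ((z.2.2 a).mp haz) this
  · rintro ⟨A, rfl⟩ u hu v hv z hz
    simp only [Set.mem_iInter, Set.mem_setOf_eq] at hu hv ⊢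
    intro a ha
    have hbet := (aux_ncard_between_iff u.1 v.1 z.1).mp ((aux_delta_eq_iff S _ _ _).mp hz)
    exact hbet.1 ⟨hu a ha, hv a ha⟩
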